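/- Let T be a bounded self-adjoint operator on a complex Hilbert space H, and let T₀ be the restriction of T to N(T)^⊥. Then σ_d(T₀) ⊆ σ_d(T) ⊆ σ_d(T₀) ∪ {0}, where σ_d denotes the discrete spectrum (isolated eigenvalues of finite multiplicity). -/

import Mathlib

open ContinuousLinearMap MeasureTheory

variable {E F : Type*} [NormedAddCommGroup E] [InnerProductSpace ℂ E] [CompleteSpace E]
  [NormedAddCommGroup F] [InnerProductSpace ℂ F] [CompleteSpace F]

/-- The point spectrum (set of eigenvalues). -/
def pointSpec (T : E →L[ℂ] E) : Set ℂ := {l | ∃ x : E, x ≠ 0 ∧ T x = l • x}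

/-- The essential spectrum of a (self-adjoint) bounded operator: eigenvalues of infinite
multiplicity, limit points of the point spectrum, and the continuous spectrum. -/
def essSpec (T : E →L[ℂ] E) : Set ℂ :=
  {l | (¬ FiniteDimensional ℂ (LinearMap.ker ((T - l • (1 : E →L[ℂ] E) : E →L[ℂ] E) : E →ₗ[ℂ] E))) ∨
       l ∈ closure (pointSpec T \ {l}) ∨
       (l ∈ spectrum ℂ T ∧ Function.Injective ⇑(T - l • (1 : E →L[ℂ] E)) ∧
         Dense (Set.range ⇑(T - l • (1 : E →L[ℂ] E))))}

/-- The discrete spectrum: isolated eigenvalues of finite multiplicity. -/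
def discSpec (T : E →L[ℂ] E) : Set ℂ :=
  {l | l ∈ pointSpec T ∧ FiniteDimensional ℂ (LinearMap.ker ((T - l • (1 : E →L[ℂ] E) : E →L[ℂ] E) : E →ₗ[ℂ] E)) ∧
       l ∉ closure (spectrum ℂ T \ {l})}

/-- The minimum modulus m(T) = inf {‖Tx‖ : ‖x‖ = 1}. -/
noncomputable def minMod (T : E →L[ℂ] F) : ℝ := sInf ((fun x => ‖T x‖) '' {x : E | ‖x‖ = 1})

/-- T attains its minimum modulus. -/
def MinAttain (T : E →L[ℂ] F) : Prop := ∃ x : E, ‖x‖ = 1 ∧ ‖T x‖ = minMod T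

/-- T attains its norm. -/
def NormAttain (T : E →L[ℂ] F) : Prop := ∃ x : E, ‖x‖ = 1 ∧ ‖T x‖ = ‖T‖

/-- T is absolutely minimum attaining (AM). -/
def AbsMinAttain (T : E →L[ℂ] F) : Prop :=
  ∀ M : Submodule ℂ E, IsClosed (M : Set E) → MinAttain (T.comp M.subtypeL)

/-- T is absolutely norm attaining (AN). -/
def AbsNormAttain (T : E →L[ℂ] F) : Prop :=
  ∀ M : Submodule ℂ E, IsClosed (M : Set E) → NormAttain (T.comp M.subtypeL)

/-- S is the Moore-Penrose (generalized) inverse of T. -/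
def MoorePenrose (T S : E →L[ℂ] E) : Prop :=
  T ∘L S ∘L T = T ∧ S ∘L T ∘L S = S ∧ IsSelfAdjoint (T ∘L S) ∧ IsSelfAdjoint (S ∘L T)

/-- T is paranormal: ‖Tx‖² ≤ ‖T²x‖‖x‖ for all x. -/
def Paranormal (T : E →L[ℂ] E) : Prop := ∀ x : E, ‖T x‖ ^ 2 ≤ ‖T (T x)‖ * ‖x‖

variable {H : Type*} [NormedAddCommGroup H] [InnerProductSpace ℂ H] [CompleteSpace H]

open scoped InnerProductSpace in
/-- For self-adjoint `T`, the range of `T` lies in `(ker T)ᗮ`. -/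
private lemma stmt2_range_mem (T : H →L[ℂ] H) (hT : IsSelfAdjoint T) (x : H) :
    T x ∈ (LinearMap.ker (T : H →ₗ[ℂ] H))ᗮ := by
  rw [Submodule.mem_orthogonal]
  intro k hk
  have hsym := ContinuousLinearMap.isSelfAdjoint_iff_isSymmetric.mp hT
  have hk0 : T k = 0 := hk
  calc ⟪k, T x⟫_ℂ = ⟪T k, x⟫_ℂ := (hsym k x).symm
    _ = 0 := by rw [hk0, inner_zero_left]

/-- If `μ ≠ 0` is not in the spectrum of `T₀`, it is not in the spectrum of `T`. -/
private lemma stmt2_spec1 (T : H →L[ℂ] H) (hT : IsSelfAdjoint T)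
    (T₀ : (LinearMap.ker (T : H →ₗ[ℂ] H))ᗮ →L[ℂ] (LinearMap.ker (T : H →ₗ[ℂ] H))ᗮ)
    (h₀ : ∀ x : (LinearMap.ker (T : H →ₗ[ℂ] H))ᗮ, (T₀ x : H) = T x)
    {μ : ℂ} (hμ : μ ≠ 0) (h : μ ∉ spectrum ℂ T₀) : μ ∉ spectrum ℂ T := by
  haveI : CompleteSpace (LinearMap.ker (T : H →ₗ[ℂ] H)) :=
    (ContinuousLinearMap.isClosed_ker T).completeSpace_coe
  set P := Submodule.orthogonalProjectionOnto (LinearMap.ker (T : H →ₗ[ℂ] H)) with hP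
  set Q := Submodule.orthogonalProjectionOnto (LinearMap.ker (T : H →ₗ[ℂ] H))ᗮ with hQ
  rw [spectrum.notMem_iff] at h ⊢
  obtain ⟨u, hu⟩ := h
  set S₀ : (LinearMap.ker (T : H →ₗ[ℂ] H))ᗮ →L[ℂ] (LinearMap.ker (T : H →ₗ[ℂ] H))ᗮ := (↑u⁻¹ : (LinearMap.ker (T : H →ₗ[ℂ] H))ᗮ →L[ℂ] (LinearMap.ker (T : H →ₗ[ℂ] H))ᗮ) with hS₀
  have hright : ∀ v : (LinearMap.ker (T : H →ₗ[ℂ] H))ᗮ, μ • (S₀ v : (LinearMap.ker (T : H →ₗ[ℂ] H))ᗮ) - T₀ (S₀ v) = v := by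
    intro v
    have := congrFun (congrArg (fun (f : (LinearMap.ker (T : H →ₗ[ℂ] H))ᗮ →L[ℂ] (LinearMap.ker (T : H →ₗ[ℂ] H))ᗮ) => (f : (LinearMap.ker (T : H →ₗ[ℂ] H))ᗮ → (LinearMap.ker (T : H →ₗ[ℂ] H))ᗮ)) u.mul_inv) v
    simp only [ContinuousLinearMap.one_apply, ContinuousLinearMap.mul_apply] at this
    rw [hu] at this
    simpa [Algebra.algebraMap_eq_smul_one, ContinuousLinearMap.sub_apply,
      ContinuousLinearMap.smul_apply, ContinuousLinearMap.one_apply] using this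
  have hleft : ∀ v : (LinearMap.ker (T : H →ₗ[ℂ] H))ᗮ, S₀ (μ • v - T₀ v) = v := by
    intro v
    have := congrFun (congrArg (fun (f : (LinearMap.ker (T : H →ₗ[ℂ] H))ᗮ →L[ℂ] (LinearMap.ker (T : H →ₗ[ℂ] H))ᗮ) => (f : (LinearMap.ker (T : H →ₗ[ℂ] H))ᗮ → (LinearMap.ker (T : H →ₗ[ℂ] H))ᗮ)) u.inv_mul) v
    simp only [ContinuousLinearMap.one_apply, ContinuousLinearMap.mul_apply] at this
    rw [hu] at this
    simpa [Algebra.algebraMap_eq_smul_one, ContinuousLinearMap.sub_apply,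
      ContinuousLinearMap.smul_apply, ContinuousLinearMap.one_apply] using this
  set S : H →L[ℂ] H :=
    (LinearMap.ker (T : H →ₗ[ℂ] H))ᗮ.subtypeL ∘L S₀ ∘L Q + μ⁻¹ • ((LinearMap.ker (T : H →ₗ[ℂ] H)).subtypeL ∘L P) with hS
  have hTx : ∀ x : H, T x = ↑(T₀ (Q x)) := by
    intro x
    have hdec : ((P x : H)) + (Q x : H) = x := by
        exact Submodule.starProjection_add_starProjection_orthogonal (K := (LinearMap.ker (T : H →ₗ[ℂ] H))) x
    have hker : T ↑(P x) = 0 := (P x).2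
    calc T x = T (↑(P x) + ↑(Q x)) := by rw [hdec]
      _ = T ↑(P x) + T ↑(Q x) := map_add T _ _
      _ = ↑(T₀ (Q x)) := by rw [hker, zero_add, ← h₀ (Q x)]
  have hPT : ∀ x : H, P (T x) = 0 := fun x =>
    Submodule.orthogonalProjectionOnto_apply_of_mem_orthogonal (stmt2_range_mem T hT x)
  have hQmem : ∀ (v : H) (hv : v ∈ (LinearMap.ker (T : H →ₗ[ℂ] H))ᗮ), (Q v : H) = v := fun v hv =>
    Submodule.starProjection_eq_self_iff (K := (LinearMap.ker (T : H →ₗ[ℂ] H))ᗮ).mpr hv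
  have hSapp : ∀ x : H, S x = ↑(S₀ (Q x)) + μ⁻¹ • ↑(P x) := by
    intro x
    simp [hS, ContinuousLinearMap.add_apply, ContinuousLinearMap.comp_apply,
      ContinuousLinearMap.smul_apply]
  have hA : ∀ x : H, (algebraMap ℂ (H →L[ℂ] H) μ - T) x = μ • x - T x := by
    intro x
    simp [Algebra.algebraMap_eq_smul_one, ContinuousLinearMap.sub_apply,
      ContinuousLinearMap.smul_apply]
  refine ⟨⟨algebraMap ℂ (H →L[ℂ] H) μ - T, S, ?_, ?_⟩, rfl⟩
  · -- (μ - T) * S = 1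
    ext x
    have hQSx : Q (S x) = S₀ (Q x) := by
      rw [hSapp x]
      have h1 : (Q (↑(S₀ (Q x)) : H)) = S₀ (Q x) :=
        Submodule.orthogonalProjectionOnto_mem_subspace_eq_self (S₀ (Q x))
      have h2 : Q (↑(P x) : H) = 0 :=
        Submodule.orthogonalProjectionOnto_apply_of_mem_orthogonal
          (Submodule.le_orthogonal_orthogonal (LinearMap.ker (T : H →ₗ[ℂ] H)) (P x).2)
      rw [map_add, _root_.map_smul, h1, h2, smul_zero, add_zero]
    have : T (S x) = ↑(T₀ (S₀ (Q x))) := by rw [hTx (S x), hQSx]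
    rw [ContinuousLinearMap.mul_apply, ContinuousLinearMap.one_apply, hA, this, hSapp x]
    have hkey := hright (Q x)
    have hkey' : μ • (↑(S₀ (Q x)) : H) - ↑(T₀ (S₀ (Q x))) = ↑(Q x) := by
      calc μ • (↑(S₀ (Q x)) : H) - ↑(T₀ (S₀ (Q x)))
          = ↑(μ • S₀ (Q x) - T₀ (S₀ (Q x))) := by push_cast; ring_nf
        _ = ↑(Q x) := by rw [hkey]
    have hdec : ((P x : H)) + (Q x : H) = x := by
        exact Submodule.starProjection_add_starProjection_orthogonal (K := (LinearMap.ker (T : H →ₗ[ℂ] H))) x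
    rw [smul_add, smul_smul, mul_inv_cancel₀ hμ, one_smul, add_sub_right_comm, hkey',
      add_comm ((Q x : H)) ((P x : H))]
    exact hdec
  · -- S * (μ - T) = 1
    ext x
    rw [ContinuousLinearMap.mul_apply, ContinuousLinearMap.one_apply, hA, hSapp]
    have hQAx : Q (μ • x - T x) = μ • Q x - T₀ (Q x) := by
      have h1 : Q (T x) = T₀ (Q x) := by
        rw [hTx x]
        exact Submodule.orthogonalProjectionOnto_mem_subspace_eq_self (T₀ (Q x))
      rw [map_sub, _root_.map_smul, h1]
    have hPAx : P (μ • x - T x) = μ • P x := by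
      rw [map_sub, _root_.map_smul, hPT x, sub_zero]
    rw [hQAx, hPAx, hleft (Q x)]
    have hdec : ((P x : H)) + (Q x : H) = x := by
        exact Submodule.starProjection_add_starProjection_orthogonal (K := (LinearMap.ker (T : H →ₗ[ℂ] H))) x
    calc (↑(Q x) : H) + μ⁻¹ • ↑(μ • P x)
        = ↑(Q x) + ↑(P x) := by
          push_cast
          rw [smul_smul, inv_mul_cancel₀ hμ, one_smul]
      _ = x := by rw [add_comm]; exact hdec

/-- If `μ` is not in the spectrum of `T`, it is not in the spectrum of `T₀`. -/
private lemma stmt2_spec2 (T : H →L[ℂ] H) (hT : IsSelfAdjoint T)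
    (T₀ : (LinearMap.ker (T : H →ₗ[ℂ] H))ᗮ →L[ℂ] (LinearMap.ker (T : H →ₗ[ℂ] H))ᗮ)
    (h₀ : ∀ x : (LinearMap.ker (T : H →ₗ[ℂ] H))ᗮ, (T₀ x : H) = T x)
    {μ : ℂ} (h : μ ∉ spectrum ℂ T) : μ ∉ spectrum ℂ T₀ := by
  haveI : CompleteSpace (LinearMap.ker (T : H →ₗ[ℂ] H)) :=
    (ContinuousLinearMap.isClosed_ker T).completeSpace_coe
  set P := Submodule.orthogonalProjectionOnto (LinearMap.ker (T : H →ₗ[ℂ] H)) with hP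
  set Q := Submodule.orthogonalProjectionOnto (LinearMap.ker (T : H →ₗ[ℂ] H))ᗮ with hQ
  rw [spectrum.notMem_iff] at h ⊢
  obtain ⟨u, hu⟩ := h
  set S : H →L[ℂ] H := (↑u⁻¹ : H →L[ℂ] H) with hSdef
  have hright : ∀ v : H, μ • S v - T (S v) = v := by
    intro v
    have := congrFun (congrArg (fun (f : H →L[ℂ] H) => (f : H → H)) u.mul_inv) v
    simp only [ContinuousLinearMap.one_apply, ContinuousLinearMap.mul_apply] at this
    rw [hu] at this
    simpa [Algebra.algebraMap_eq_smul_one, ContinuousLinearMap.sub_apply,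
      ContinuousLinearMap.smul_apply, ContinuousLinearMap.one_apply] using this
  have hleft : ∀ v : H, S (μ • v - T v) = v := by
    intro v
    have := congrFun (congrArg (fun (f : H →L[ℂ] H) => (f : H → H)) u.inv_mul) v
    simp only [ContinuousLinearMap.one_apply, ContinuousLinearMap.mul_apply] at this
    rw [hu] at this
    simpa [Algebra.algebraMap_eq_smul_one, ContinuousLinearMap.sub_apply,
      ContinuousLinearMap.smul_apply, ContinuousLinearMap.one_apply] using this
  have hPT : ∀ x : H, P (T x) = 0 := fun x =>
    Submodule.orthogonalProjectionOnto_apply_of_mem_orthogonal (stmt2_range_mem T hT x)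
  -- S maps (LinearMap.ker (T : H →ₗ[ℂ] H))ᗮ into (LinearMap.ker (T : H →ₗ[ℂ] H))ᗮ
  have hSmem : ∀ v : H, v ∈ (LinearMap.ker (T : H →ₗ[ℂ] H))ᗮ → S v ∈ (LinearMap.ker (T : H →ₗ[ℂ] H))ᗮ := by
    rcases eq_or_ne μ 0 with hμ | hμ
    · -- T is invertible, so (LinearMap.ker (T : H →ₗ[ℂ] H)) = ⊥ and (LinearMap.ker (T : H →ₗ[ℂ] H))ᗮ = ⊤
      have hKbot : (LinearMap.ker (T : H →ₗ[ℂ] H)) = ⊥ := by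
        rw [Submodule.eq_bot_iff]
        intro x hx
        have hx0 : T x = 0 := hx
        have := hleft x
        rw [hμ, zero_smul, zero_sub, hx0, neg_zero, map_zero] at this
        exact this.symm
      intro v _
      rw [hKbot, Submodule.bot_orthogonal_eq_top]
      exact Submodule.mem_top
    · intro v hv
      have hPv : P v = 0 :=
        Submodule.orthogonalProjectionOnto_apply_of_mem_orthogonal hv
      have hPSv : μ • P (S v) = 0 := by
        have h1 : P (μ • S v - T (S v)) = P v := by rw [hright v]
        rw [map_sub, _root_.map_smul, hPT (S v), sub_zero, hPv] at h1
        exact h1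
      have hPSv0 : P (S v) = 0 := by
        have := smul_eq_zero.mp hPSv
        tauto
      have hdec : ((P (S v) : H)) + (Q (S v) : H) = (S v) := by
        exact Submodule.starProjection_add_starProjection_orthogonal (K := (LinearMap.ker (T : H →ₗ[ℂ] H))) (S v)
      rw [hPSv0] at hdec
      simp only [Submodule.coe_zero, zero_add] at hdec
      rw [← hdec]
      exact (Q (S v)).2
  set S₀ : (LinearMap.ker (T : H →ₗ[ℂ] H))ᗮ →L[ℂ] (LinearMap.ker (T : H →ₗ[ℂ] H))ᗮ := Q ∘L S ∘L (LinearMap.ker (T : H →ₗ[ℂ] H))ᗮ.subtypeL with hS₀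
  have hS₀app : ∀ v : (LinearMap.ker (T : H →ₗ[ℂ] H))ᗮ, (↑(S₀ v) : H) = S ↑v := by
    intro v
    simp only [hS₀, ContinuousLinearMap.comp_apply, Submodule.subtypeL_apply]
    exact Submodule.starProjection_eq_self_iff (K := (LinearMap.ker (T : H →ₗ[ℂ] H))ᗮ).mpr (hSmem ↑v v.2)
  refine ⟨⟨algebraMap ℂ ((LinearMap.ker (T : H →ₗ[ℂ] H))ᗮ →L[ℂ] (LinearMap.ker (T : H →ₗ[ℂ] H))ᗮ) μ - T₀, S₀, ?_, ?_⟩, rfl⟩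
  · ext v
    rw [ContinuousLinearMap.mul_apply, ContinuousLinearMap.one_apply]
    have : ((algebraMap ℂ ((LinearMap.ker (T : H →ₗ[ℂ] H))ᗮ →L[ℂ] (LinearMap.ker (T : H →ₗ[ℂ] H))ᗮ) μ - T₀) (S₀ v) : H)
        = μ • (↑(S₀ v) : H) - ↑(T₀ (S₀ v)) := by
      simp [Algebra.algebraMap_eq_smul_one, ContinuousLinearMap.sub_apply,
        ContinuousLinearMap.smul_apply]
    rw [this, h₀ (S₀ v), hS₀app v, hright ↑v]
  · ext v
    rw [ContinuousLinearMap.mul_apply, ContinuousLinearMap.one_apply]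
    have hAv : ((algebraMap ℂ ((LinearMap.ker (T : H →ₗ[ℂ] H))ᗮ →L[ℂ] (LinearMap.ker (T : H →ₗ[ℂ] H))ᗮ) μ - T₀) v : H) = μ • (↑v : H) - T ↑v := by
      simp [Algebra.algebraMap_eq_smul_one, ContinuousLinearMap.sub_apply,
        ContinuousLinearMap.smul_apply, h₀ v]
    rw [hS₀app ((algebraMap ℂ ((LinearMap.ker (T : H →ₗ[ℂ] H))ᗮ →L[ℂ] (LinearMap.ker (T : H →ₗ[ℂ] H))ᗮ) μ - T₀) v), hAv, hleft ↑v]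

theorem stmt2 (T : H →L[ℂ] H) (hT : IsSelfAdjoint T)
    (T₀ : (LinearMap.ker (T : H →ₗ[ℂ] H))ᗮ →L[ℂ] (LinearMap.ker (T : H →ₗ[ℂ] H))ᗮ)
    (h₀ : ∀ x : (LinearMap.ker (T : H →ₗ[ℂ] H))ᗮ, (T₀ x : H) = T x) :
    discSpec T₀ ⊆ discSpec T ∧ discSpec T ⊆ discSpec T₀ ∪ {0} := by
  haveI : CompleteSpace (LinearMap.ker (T : H →ₗ[ℂ] H)) :=
    (ContinuousLinearMap.isClosed_ker T).completeSpace_coe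
  -- membership characterizations of eigenvector kernels
  have hmemT : ∀ (l : ℂ) (y : H),
      y ∈ LinearMap.ker ((T - l • (1 : H →L[ℂ] H) : H →L[ℂ] H) : H →ₗ[ℂ] H) ↔ T y = l • y := by
    intro l y
    rw [LinearMap.mem_ker]
    have h1 : (T - l • (1 : H →L[ℂ] H)) y = T y - l • y := by
      simp [ContinuousLinearMap.sub_apply, ContinuousLinearMap.smul_apply]
    rw [ContinuousLinearMap.coe_coe, h1, sub_eq_zero]
  have hmemT₀ : ∀ (l : ℂ) (y : (LinearMap.ker (T : H →ₗ[ℂ] H))ᗮ),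
      y ∈ LinearMap.ker ((T₀ - l • (1 : (LinearMap.ker (T : H →ₗ[ℂ] H))ᗮ →L[ℂ] (LinearMap.ker (T : H →ₗ[ℂ] H))ᗮ) : (LinearMap.ker (T : H →ₗ[ℂ] H))ᗮ →L[ℂ] (LinearMap.ker (T : H →ₗ[ℂ] H))ᗮ) : (LinearMap.ker (T : H →ₗ[ℂ] H))ᗮ →ₗ[ℂ] (LinearMap.ker (T : H →ₗ[ℂ] H))ᗮ) ↔ T₀ y = l • y := by
    intro l y
    rw [LinearMap.mem_ker]
    have h1 : (T₀ - l • (1 : (LinearMap.ker (T : H →ₗ[ℂ] H))ᗮ →L[ℂ] (LinearMap.ker (T : H →ₗ[ℂ] H))ᗮ)) y = T₀ y - l • y := by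
      simp [ContinuousLinearMap.sub_apply, ContinuousLinearMap.smul_apply]
    rw [ContinuousLinearMap.coe_coe, h1, sub_eq_zero]
  -- eigenvectors of T for nonzero eigenvalue lie in (LinearMap.ker (T : H →ₗ[ℂ] H))ᗮ
  have heig_mem : ∀ (l : ℂ), l ≠ 0 → ∀ y : H, T y = l • y → y ∈ (LinearMap.ker (T : H →ₗ[ℂ] H))ᗮ := by
    intro l hl y hy
    have : y = l⁻¹ • T y := by rw [hy, smul_smul, inv_mul_cancel₀ hl, one_smul]
    rw [this]
    exact Submodule.smul_mem _ _ (stmt2_range_mem T hT y)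
  constructor
  · -- discSpec T₀ ⊆ discSpec T
    rintro l ⟨⟨x, hx0, hx⟩, hfin, hiso⟩
    have hl0 : l ≠ 0 := by
      rintro rfl
      have h1 : T ↑x = 0 := by
        rw [← h₀ x, hx, zero_smul, Submodule.coe_zero]
      have h2 : (↑x : H) ∈ (LinearMap.ker (T : H →ₗ[ℂ] H)) := h1
      have h3 : (↑x : H) = 0 := by
        have := inner_self_eq_zero.mp
          (Submodule.inner_right_of_mem_orthogonal h2 x.2)
        exact this
      exact hx0 (Subtype.ext h3)
    refine ⟨⟨↑x, fun hc => hx0 (Subtype.ext hc), ?_⟩, ?_, ?_⟩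
    · rw [← h₀ x, hx, Submodule.coe_smul]
    · -- finite dimensionality of ker (T - l)
      haveI := hfin
      let g : (LinearMap.ker ((T - l • (1 : H →L[ℂ] H) : H →L[ℂ] H) : H →ₗ[ℂ] H)) →ₗ[ℂ]
          (LinearMap.ker ((T₀ - l • (1 : (LinearMap.ker (T : H →ₗ[ℂ] H))ᗮ →L[ℂ] (LinearMap.ker (T : H →ₗ[ℂ] H))ᗮ) : (LinearMap.ker (T : H →ₗ[ℂ] H))ᗮ →L[ℂ] (LinearMap.ker (T : H →ₗ[ℂ] H))ᗮ) : (LinearMap.ker (T : H →ₗ[ℂ] H))ᗮ →ₗ[ℂ] (LinearMap.ker (T : H →ₗ[ℂ] H))ᗮ)) :=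
        { toFun := fun y =>
            ⟨⟨(y : H), heig_mem l hl0 y ((hmemT l y).mp y.2)⟩, by
              rw [hmemT₀]
              apply Subtype.ext
              simp only [h₀, Submodule.coe_smul]
              exact (hmemT l y).mp y.2⟩
          map_add' := fun a b => by ext; rfl
          map_smul' := fun c a => by ext; rfl }
      have hginj : Function.Injective g := by
        intro a b hab
        apply Subtype.ext
        have := congrArg (fun z => ((z : (LinearMap.ker (T : H →ₗ[ℂ] H))ᗮ) : H)) (Subtype.ext_iff.mp hab)
        exact this
      exact FiniteDimensional.of_injective g hginj
    · -- isolation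
      intro hc
      have hsub : spectrum ℂ T \ {l} ⊆ (spectrum ℂ T₀ \ {l}) ∪ {(0 : ℂ)} := by
        rintro μ ⟨hμs, hμl⟩
        rcases eq_or_ne μ 0 with rfl | hμ0
        · exact Or.inr rfl
        · refine Or.inl ⟨?_, hμl⟩
          by_contra hns
          exact stmt2_spec1 T hT T₀ h₀ hμ0 hns hμs
      have := closure_mono hsub hc
      rw [closure_union, closure_singleton] at this
      rcases this with h1 | h2
      · exact hiso h1
      · exact hl0 (Set.mem_singleton_iff.mp h2)
  · -- discSpec T ⊆ discSpec T₀ ∪ {0}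
    rintro l ⟨⟨x, hx0, hx⟩, hfin, hiso⟩
    rcases eq_or_ne l 0 with rfl | hl0
    · exact Or.inr rfl
    refine Or.inl ⟨⟨⟨x, heig_mem l hl0 x hx⟩, ?_, ?_⟩, ?_, ?_⟩
    · intro hc
      apply hx0
      simpa using Subtype.ext_iff.mp hc
    · apply Subtype.ext
      rw [h₀]
      exact hx
    · -- finite dimensionality of ker (T₀ - l)
      haveI := hfin
      let f : (LinearMap.ker ((T₀ - l • (1 : (LinearMap.ker (T : H →ₗ[ℂ] H))ᗮ →L[ℂ] (LinearMap.ker (T : H →ₗ[ℂ] H))ᗮ) : (LinearMap.ker (T : H →ₗ[ℂ] H))ᗮ →L[ℂ] (LinearMap.ker (T : H →ₗ[ℂ] H))ᗮ) : (LinearMap.ker (T : H →ₗ[ℂ] H))ᗮ →ₗ[ℂ] (LinearMap.ker (T : H →ₗ[ℂ] H))ᗮ)) →ₗ[ℂ]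
          (LinearMap.ker ((T - l • (1 : H →L[ℂ] H) : H →L[ℂ] H) : H →ₗ[ℂ] H)) :=
        { toFun := fun y =>
            ⟨((y : (LinearMap.ker (T : H →ₗ[ℂ] H))ᗮ) : H), by
              rw [hmemT]
              rw [← h₀, (hmemT₀ l y).mp y.2]
              rfl⟩
          map_add' := fun a b => by ext; rfl
          map_smul' := fun c a => by ext; rfl }
      have hfinj : Function.Injective f := by
        intro a b hab
        apply Subtype.ext
        apply Subtype.ext
        exact congrArg
          (fun z : LinearMap.ker ((T - l • (1 : H →L[ℂ] H) : H →L[ℂ] H) : H →ₗ[ℂ] H) => (z : H)) hab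
      exact FiniteDimensional.of_injective f hfinj
    · -- isolation
      intro hc
      apply hiso
      refine closure_mono ?_ hc
      rintro μ ⟨hμs, hμl⟩
      refine ⟨?_, hμl⟩
      by_contra hns
      exact stmt2_spec2 T hT T₀ h₀ hns hμs
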